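/- For T = L^m and T' = ({0}×T) ∪ ({1}×(−T)) ⊆ Z/2Z × (Z/4Z)^{2m}, the difference multiset of T' has the following spectrum: the value 0 occurs 2^{4m+1} − 10^m − 13^m times; for odd l with 1 ≤ l ≤ m+1, the value 2^l occurs 12^{m−(l−1)/2}·C(m,(l−1)/2) + 2^{2m−l+1}·3^{l−1}·C(m,l−1) times; for even l with 2 ≤ l ≤ m+1, the value 2^l occurs 2^{2m−l+1}·3^{l−1}·C(m,l−1) times; and for odd l with m+2 ≤ l ≤ 2m+1, the value 2^l occurs 12^{m−(l−1)/2}·C(m,(l−1)/2) times. -/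

import Mathlib

open Finset

abbrev G4 : Type := ZMod 4 × ZMod 4

def L : Finset G4 := {(0,0),(0,1),(1,0),(3,3)}

/-- `T = L^m ⊆ ((ℤ/4ℤ)²)^m`. -/
def Tm (m : ℕ) : Finset (Fin m → G4) := Fintype.piFinset fun _ => L

/-- `T' = ({0} × T) ∪ ({1} × (-T)) ⊆ ℤ/2ℤ × ((ℤ/4ℤ)²)^m`. -/
def T' (m : ℕ) : Finset (ZMod 2 × (Fin m → G4)) :=
  (({0} : Finset (ZMod 2)) ×ˢ Tm m) ∪
    (({1} : Finset (ZMod 2)) ×ˢ (Tm m).image fun t => -t)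

/-- `ν_A(y)`, the number of pairs `(a,b) ∈ A × A` with `a - b = y`,
i.e. the coefficient `[A A⁽⁻¹⁾]_y`. -/
def nu {G : Type*} [AddCommGroup G] [DecidableEq G] (A : Finset G) (y : G) : ℕ :=
  ((A ×ˢ A).filter fun p => p.1 - p.2 = y).card

/-! ### Auxiliary machinery -/

/-- Number of `a ∈ L` with `a + z ∈ L` (the difference count `ν_L(z)`). -/
def f0 (z : G4) : ℕ := (L.filter fun a => a + z ∈ L).card

/-- Number of `a ∈ L` with `-(a + z) ∈ L` (the sum count `σ_L(-z)`). -/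
def f1 (z : G4) : ℕ := (L.filter fun a => -(a + z) ∈ L).card

lemma nu_eq_card_filter {G : Type*} [AddCommGroup G] [DecidableEq G] (A : Finset G) (g : G) :
    nu A g = (A.filter fun b => b + g ∈ A).card := by
  unfold nu
  apply Finset.card_nbij' (i := fun p => p.2) (j := fun b => (b + g, b))
  · intro p hp
    simp only [coe_filter, Set.mem_setOf_eq, mem_filter, mem_product] at hp ⊢
    obtain ⟨⟨h1, h2⟩, h3⟩ := hp
    refine ⟨h2, ?_⟩
    have h : p.2 + g = p.1 := by rw [← h3]; abel
    rwa [h]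
  · intro b hb
    simp only [coe_filter, Set.mem_setOf_eq, mem_filter, mem_product] at hb ⊢
    exact ⟨⟨hb.2, hb.1⟩, by abel⟩
  · intro p hp
    simp only [coe_filter, Set.mem_setOf_eq, mem_filter, mem_product] at hp
    have h : p.2 + g = p.1 := by rw [← hp.2]; abel
    simp [h]
  · intro b _; rfl

lemma mem_T' (m : ℕ) (e : ZMod 2) (x : Fin m → G4) :
    (e, x) ∈ T' m ↔ (e = 0 ∧ x ∈ Tm m) ∨ (e = 1 ∧ -x ∈ Tm m) := by
  simp only [T', mem_union, mem_product, mem_singleton, mem_image]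
  constructor
  · rintro (⟨h1, h2⟩ | ⟨h1, t, ht, rfl⟩)
    · exact Or.inl ⟨h1, h2⟩
    · exact Or.inr ⟨h1, by simpa using ht⟩
  · rintro (⟨h1, h2⟩ | ⟨h1, h2⟩)
    · exact Or.inl ⟨h1, h2⟩
    · exact Or.inr ⟨h1, -x, h2, by simp⟩

lemma neg_injective_G4 (m : ℕ) : Function.Injective (fun t : Fin m → G4 => -t) :=
  fun a b h => by simpa using congrArg (fun t => -t) h

lemma card_filter_T' (m : ℕ) (P : ZMod 2 × (Fin m → G4) → Prop) [DecidablePred P] :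
    ((T' m).filter P).card
      = ((Tm m).filter fun t => P (0, t)).card + ((Tm m).filter fun t => P (1, -t)).card := by
  unfold T'
  rw [filter_union, card_union_of_disjoint]
  · congr 1
    · rw [singleton_product, filter_map, card_map]
      exact Finset.card_bij (fun t _ => t) (fun t ht => by simpa using ht)
        (fun _ _ _ _ h => h) (fun t ht => ⟨t, by simpa using ht, rfl⟩)
    · rw [singleton_product, filter_map, Finset.filter_image, card_map,
        card_image_of_injective _ (neg_injective_G4 m)]
      exact Finset.card_bij (fun t _ => t) (fun t ht => by simpa using ht)
        (fun _ _ _ _ h => h) (fun t ht => ⟨t, by simpa using ht, rfl⟩)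
  · refine disjoint_filter_filter ?_
    rw [Finset.disjoint_left]
    rintro ⟨e, x⟩ h1 h2
    rw [mem_product, mem_singleton] at h1 h2
    have : (0 : ZMod 2) ≠ 1 := by decide
    exact this (h1.1 ▸ h2.1 ▸ rfl)

lemma count_pi (m : ℕ) (p : Fin m → G4 → Prop) [∀ i, DecidablePred (p i)] :
    ((Tm m).filter fun t => ∀ i, p i (t i)).card = ∏ i, (L.filter (p i)).card := by
  have h : (Tm m).filter (fun t => ∀ i, p i (t i)) = Fintype.piFinset fun i => L.filter (p i) := by
    ext t
    simp [Tm, Fintype.mem_piFinset, forall_and]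
  rw [h, Fintype.card_piFinset]

lemma mem_Tm_iff (m : ℕ) (t : Fin m → G4) : t ∈ Tm m ↔ ∀ i, t i ∈ L := by
  simp [Tm, Fintype.mem_piFinset]

lemma nu_zero_eq (m : ℕ) (y : Fin m → G4) :
    nu (T' m) (0, y) = 2 * ∏ i, f0 (y i) := by
  rw [nu_eq_card_filter, card_filter_T']
  have e1 : ((Tm m).filter fun t => ((0 : ZMod 2), t) + (0, y) ∈ T' m).card
      = ∏ i, f0 (y i) := by
    have hset : (Tm m).filter (fun t => ((0 : ZMod 2), t) + (0, y) ∈ T' m)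
        = (Tm m).filter fun t => ∀ i, t i + y i ∈ L := by
      refine Finset.filter_congr fun t _ => ?_
      have h : ((0 : ZMod 2), t) + (0, y) = ((0 : ZMod 2), t + y) := by
        simp [Prod.ext_iff]
      rw [h, mem_T']
      simp [mem_Tm_iff, show (0 : ZMod 2) ≠ 1 by decide]
    rw [hset]
    exact count_pi m fun i a => a + y i ∈ L
  have e2 : ((Tm m).filter fun t => ((1 : ZMod 2), -t) + (0, y) ∈ T' m).card
      = ∏ i, f0 (y i) := by
    have key : ∀ z : G4, (L.filter fun a => -(-a + z) ∈ L).card = f0 z := by decide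
    have hset : (Tm m).filter (fun t => ((1 : ZMod 2), -t) + (0, y) ∈ T' m)
        = (Tm m).filter fun t => ∀ i, -(-(t i) + y i) ∈ L := by
      refine Finset.filter_congr fun t _ => ?_
      have h : ((1 : ZMod 2), -t) + (0, y) = ((1 : ZMod 2), -t + y) := by
        simp [Prod.ext_iff]
      rw [h, mem_T']
      simp only [show ((1 : ZMod 2) = 0) = False by simp, false_and, false_or,
        show ((1 : ZMod 2) = 1) = True by simp, true_and]
      rw [mem_Tm_iff]
      constructor <;> intro hh i <;> simpa using hh i
    rw [hset, count_pi m fun i a => -(-a + y i) ∈ L]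
    exact Finset.prod_congr rfl fun i _ => key (y i)
  rw [e1, e2]; ring

lemma nu_one_eq (m : ℕ) (y : Fin m → G4) :
    nu (T' m) (1, y) = 2 * ∏ i, f1 (y i) := by
  rw [nu_eq_card_filter, card_filter_T']
  have e1 : ((Tm m).filter fun t => ((0 : ZMod 2), t) + (1, y) ∈ T' m).card
      = ∏ i, f1 (y i) := by
    have hset : (Tm m).filter (fun t => ((0 : ZMod 2), t) + (1, y) ∈ T' m)
        = (Tm m).filter fun t => ∀ i, -(t i + y i) ∈ L := by
      refine Finset.filter_congr fun t _ => ?_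
      have h : ((0 : ZMod 2), t) + (1, y) = ((1 : ZMod 2), t + y) := by
        simp [Prod.ext_iff]
      rw [h, mem_T']
      simp only [show ((1 : ZMod 2) = 0) = False by simp, false_and, false_or,
        show ((1 : ZMod 2) = 1) = True by simp, true_and]
      rw [mem_Tm_iff]
      constructor <;> intro hh i <;> simpa using hh i
    rw [hset]
    exact count_pi m fun i a => -(a + y i) ∈ L
  have e2 : ((Tm m).filter fun t => ((1 : ZMod 2), -t) + (1, y) ∈ T' m).card
      = ∏ i, f1 (y i) := by
    have key : ∀ z : G4, (L.filter fun a => -a + z ∈ L).card = f1 z := by decide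
    have hset : (Tm m).filter (fun t => ((1 : ZMod 2), -t) + (1, y) ∈ T' m)
        = (Tm m).filter fun t => ∀ i, -(t i) + y i ∈ L := by
      refine Finset.filter_congr fun t _ => ?_
      have h11 : (1 : ZMod 2) + 1 = 0 := by decide
      have h : ((1 : ZMod 2), -t) + (1, y) = ((0 : ZMod 2), -t + y) := by
        simp [Prod.ext_iff, h11]
      rw [h, mem_T']
      simp only [show ((0 : ZMod 2) = 1) = False by simp, false_and, or_false,
        show ((0 : ZMod 2) = 0) = True by simp, true_and]
      rw [mem_Tm_iff]
      constructor <;> intro hh i <;> simpa using hh i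
    rw [hset, count_pi m fun i a => -a + y i ∈ L]
    exact Finset.prod_congr rfl fun i _ => key (y i)
  rw [e1, e2]; ring

lemma card_split (m : ℕ) (P : ZMod 2 × (Fin m → G4) → Prop) [DecidablePred P] :
    ((univ : Finset (ZMod 2 × (Fin m → G4))).filter P).card
      = ((univ : Finset (Fin m → G4)).filter fun y => P (0, y)).card
        + ((univ : Finset (Fin m → G4)).filter fun y => P (1, y)).card := by
  have h : (univ : Finset (ZMod 2 × (Fin m → G4)))
      = (({0} : Finset (ZMod 2)) ×ˢ univ) ∪ (({1} : Finset (ZMod 2)) ×ˢ univ) := by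
    ext ⟨e, y⟩
    simp only [mem_univ, mem_union, mem_product, mem_singleton, true_iff, and_true]
    revert e; decide
  rw [h, filter_union, card_union_of_disjoint]
  · congr 1
    · rw [singleton_product, filter_map, card_map]
      exact Finset.card_bij (fun t _ => t) (fun t ht => by simpa using ht)
        (fun _ _ _ _ h => h) (fun t ht => ⟨t, by simpa using ht, rfl⟩)
    · rw [singleton_product, filter_map, card_map]
      exact Finset.card_bij (fun t _ => t) (fun t ht => by simpa using ht)
        (fun _ _ _ _ h => h) (fun t ht => ⟨t, by simpa using ht, rfl⟩)
  · refine disjoint_filter_filter ?_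
    rw [Finset.disjoint_left]
    rintro ⟨e, x⟩ h1 h2
    rw [mem_product, mem_singleton] at h1 h2
    have : (0 : ZMod 2) ≠ 1 := by decide
    exact this (h1.1 ▸ h2.1 ▸ rfl)

/-- Main counting lemma: number of `y : Fin m → G4` with `∏ f (y i) = c ^ k`. -/
lemma count_prod_pow (f : G4 → ℕ) (c a b : ℕ) (hc : 2 ≤ c)
    (hf : ∀ z, f z = 0 ∨ f z = 1 ∨ f z = c)
    (ha : ((univ : Finset G4).filter fun z => f z = c).card = a)
    (hb : ((univ : Finset G4).filter fun z => f z = 1).card = b) :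
    ∀ m k, (((univ : Finset (Fin m → G4))).filter fun y => ∏ i, f (y i) = c ^ k).card
      = m.choose k * a ^ k * b ^ (m - k) := by
  intro m
  induction m with
  | zero =>
    intro k
    rcases k with _ | k
    · simp only [pow_zero, Nat.choose_self, one_mul, Nat.sub_zero]
      rw [filter_true_of_mem (by intro y _; simp), card_univ]
      simp
    · rw [Finset.filter_eq_empty_iff.mpr, card_empty, Nat.choose_eq_zero_of_lt (by omega)]
      · ring
      · intro y _
        simp only [Finset.univ_eq_empty, Finset.prod_empty]
        intro h
        have h2 : 2 ≤ c ^ (k + 1) :=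
          le_trans hc (Nat.le_self_pow (by omega) c)
        omega
  | succ m ih =>
    intro k
    have key : (((univ : Finset (Fin (m+1) → G4))).filter fun y => ∏ i, f (y i) = c ^ k).card
        = ∑ x : G4, (((univ : Finset (Fin m → G4))).filter
            fun t => f x * ∏ i, f (t i) = c ^ k).card := by
      rw [Finset.card_filter]
      rw [← Equiv.sum_comp (Fin.consEquiv fun _ => G4)
        (fun y => if (∏ i, f (y i)) = c ^ k then 1 else 0)]
      rw [Fintype.sum_prod_type]
      refine Finset.sum_congr rfl fun x _ => ?_
      rw [Finset.card_filter]
      refine Finset.sum_congr rfl fun t _ => ?_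
      congr 1
      rw [eq_iff_iff]
      have hprod : (∏ i, f ((Fin.consEquiv fun _ => G4) (x, t) i)) = f x * ∏ i, f (t i) := by
        rw [Fin.prod_univ_succ]
        simp [Fin.consEquiv]
      rw [hprod]
    rw [key]
    clear key
    have hcpos : 0 < c := by omega
    rcases k with _ | k
    · have hx : ∀ x : G4, (((univ : Finset (Fin m → G4))).filter
          fun t => f x * ∏ i, f (t i) = c ^ 0).card
          = if f x = 1 then Nat.choose m 0 * a ^ 0 * b ^ (m - 0) else 0 := by
        intro x
        rcases hf x with h | h | h
        · rw [h, if_neg (by omega)]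
          rw [Finset.filter_eq_empty_iff.mpr, card_empty]
          intro t _
          simp
        · rw [h, if_pos rfl, ← ih 0]
          refine congrArg _ (Finset.filter_congr fun t _ => by simp)
        · rw [h, if_neg (by omega)]
          rw [Finset.filter_eq_empty_iff.mpr, card_empty]
          intro t _
          simp only [pow_zero]
          intro hcontra
          have h1 := Nat.eq_one_of_mul_eq_one_right hcontra
          omega
      rw [Finset.sum_congr rfl fun x _ => hx x]
      rw [← Finset.sum_filter, Finset.sum_const, hb, smul_eq_mul]
      simp only [Nat.choose_zero_right, pow_zero, one_mul, Nat.sub_zero]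
      ring
    · have hx : ∀ x : G4, (((univ : Finset (Fin m → G4))).filter
          fun t => f x * ∏ i, f (t i) = c ^ (k+1)).card
          = (if f x = 1 then Nat.choose m (k+1) * a ^ (k+1) * b ^ (m - (k+1)) else 0)
            + (if f x = c then Nat.choose m k * a ^ k * b ^ (m - k) else 0) := by
        intro x
        rcases hf x with h | h | h
        · rw [h, if_neg (by omega), if_neg (by omega)]
          rw [Finset.filter_eq_empty_iff.mpr, card_empty]
          intro t _
          simp only [zero_mul]
          intro hcontra
          have h1 : 0 < c ^ (k+1) := Nat.pow_pos hcpos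
          omega
        · rw [h, if_pos rfl, if_neg (by omega), add_zero, ← ih (k+1)]
          refine congrArg _ (Finset.filter_congr fun t _ => by simp)
        · rw [h, if_neg (by omega), if_pos rfl, zero_add, ← ih k]
          refine congrArg _ (Finset.filter_congr fun t _ => ?_)
          constructor
          · intro hyp
            have h1 : c * ∏ i, f (t i) = c * c ^ k := by
              rw [hyp, pow_succ]; ring
            exact Nat.eq_of_mul_eq_mul_left hcpos h1
          · intro hyp
            rw [hyp, pow_succ]; ring
      rw [Finset.sum_congr rfl fun x _ => hx x, Finset.sum_add_distrib]
      rw [← Finset.sum_filter, Finset.sum_const, hb, smul_eq_mul]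
      rw [← Finset.sum_filter, Finset.sum_const, ha, smul_eq_mul]
      rcases le_or_gt (k+1) m with h | h
      · obtain ⟨d, hd⟩ : ∃ d, m - k = d + 1 := ⟨m - (k+1), by omega⟩
        have hd2 : m - (k+1) = d := by omega
        have hd3 : m + 1 - (k + 1) = d + 1 := by omega
        rw [Nat.choose_succ_succ, hd, hd2, hd3]
        ring
      · rw [Nat.choose_eq_zero_of_lt h, Nat.choose_succ_succ,
          Nat.choose_eq_zero_of_lt h]
        have h2 : m + 1 - (k+1) = m - k := by omega
        rw [h2]
        ring

lemma prod_zero_or_pow (f : G4 → ℕ) (c : ℕ) (hf : ∀ z, f z = 0 ∨ f z = 1 ∨ f z = c)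
    (m : ℕ) (y : Fin m → G4) :
    (∏ i, f (y i)) = 0 ∨ ∃ k, (∏ i, f (y i)) = c ^ k := by
  refine Finset.prod_induction (fun i => f (y i)) (fun n => n = 0 ∨ ∃ k, n = c ^ k) ?_ ?_ ?_
  · rintro u v (rfl | ⟨j, rfl⟩) hv
    · left; simp
    · rcases hv with rfl | ⟨k, rfl⟩
      · left; simp
      · right; exact ⟨j + k, by rw [pow_add]⟩
  · right; exact ⟨0, by simp⟩
  · intro i _
    rcases hf (y i) with h | h | h
    · left; exact h
    · right; exact ⟨0, by simp [h]⟩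
    · right; exact ⟨1, by simp [h]⟩

/-! ### Facts about `f0`, `f1` by finite checking -/

lemma f0_vals : ∀ z : G4, f0 z = 0 ∨ f0 z = 1 ∨ f0 z = 4 := by decide
lemma f1_vals : ∀ z : G4, f1 z = 0 ∨ f1 z = 1 ∨ f1 z = 2 := by decide
lemma f0_card4 : ((univ : Finset G4).filter fun z => f0 z = 4).card = 1 := by decide
lemma f0_card1 : ((univ : Finset G4).filter fun z => f0 z = 1).card = 12 := by decide
lemma f1_card2 : ((univ : Finset G4).filter fun z => f1 z = 2).card = 6 := by decide
lemma f1_card1 : ((univ : Finset G4).filter fun z => f1 z = 1).card = 4 := by decide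
lemma f0_cardne : ((univ : Finset G4).filter fun z => f0 z ≠ 0).card = 13 := by decide
lemma f1_cardne : ((univ : Finset G4).filter fun z => f1 z ≠ 0).card = 10 := by decide

lemma count_ne_zero (f : G4 → ℕ) (n : ℕ)
    (hn : ((univ : Finset G4).filter fun z => f z ≠ 0).card = n) (m : ℕ) :
    (((univ : Finset (Fin m → G4))).filter fun y => ∏ i, f (y i) ≠ 0).card = n ^ m := by
  have h : ((univ : Finset (Fin m → G4))).filter (fun y => ∏ i, f (y i) ≠ 0)
      = Fintype.piFinset fun _ => (univ : Finset G4).filter fun z => f z ≠ 0 := by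
    ext y
    simp [Fintype.mem_piFinset, Finset.prod_ne_zero_iff]
  rw [h, Fintype.card_piFinset]
  simp [hn]

lemma arith_six (m j : ℕ) (h : j ≤ m) :
    Nat.choose m j * 6 ^ j * 4 ^ (m - j) = 2 ^ (2 * m + 1 - (j + 1)) * 3 ^ j * Nat.choose m j := by
  obtain ⟨d, rfl⟩ := Nat.exists_eq_add_of_le h
  have h1 : j + d - j = d := by omega
  have h2 : 2 * (j + d) + 1 - (j + 1) = j + 2 * d := by omega
  rw [h1, h2, pow_add, show (6:ℕ) = 2 * 3 by norm_num, mul_pow,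
    show (4:ℕ) = 2 ^ 2 by norm_num, ← pow_mul]
  ring

/-- The difference spectrum of `T'`. -/
theorem stmt18 (m : ℕ) (hm : 1 ≤ m) :
    ((univ.filter fun g => nu (T' m) g = 0).card = 2 ^ (4 * m + 1) - 10 ^ m - 13 ^ m) ∧
    (∀ l, Odd l → 1 ≤ l → l ≤ m + 1 →
      (univ.filter fun g => nu (T' m) g = 2 ^ l).card
        = 12 ^ (m - (l - 1) / 2) * m.choose ((l - 1) / 2)
            + 2 ^ (2 * m + 1 - l) * 3 ^ (l - 1) * m.choose (l - 1)) ∧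
    (∀ l, Even l → 2 ≤ l → l ≤ m + 1 →
      (univ.filter fun g => nu (T' m) g = 2 ^ l).card
        = 2 ^ (2 * m + 1 - l) * 3 ^ (l - 1) * m.choose (l - 1)) ∧
    (∀ l, Odd l → m + 2 ≤ l → l ≤ 2 * m + 1 →
      (univ.filter fun g => nu (T' m) g = 2 ^ l).card
        = 12 ^ (m - (l - 1) / 2) * m.choose ((l - 1) / 2)) := by
  classical
  have split2 : ∀ w v : ℕ, 1 ≤ v → w = 2 * v →
      (univ.filter fun g => nu (T' m) g = w).card
        = (((univ : Finset (Fin m → G4))).filter fun y => ∏ i, f0 (y i) = v).card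
          + (((univ : Finset (Fin m → G4))).filter fun y => ∏ i, f1 (y i) = v).card := by
    intro w v hv hw
    rw [card_split m (fun g => nu (T' m) g = w)]
    have hs0 : ((univ : Finset (Fin m → G4)).filter fun y => nu (T' m) (0, y) = w)
        = (univ.filter fun y => ∏ i, f0 (y i) = v) := by
      refine Finset.filter_congr fun y _ => ?_
      rw [nu_zero_eq, hw]
      constructor <;> intro h <;> omega
    have hs1 : ((univ : Finset (Fin m → G4)).filter fun y => nu (T' m) (1, y) = w)
        = (univ.filter fun y => ∏ i, f1 (y i) = v) := by
      refine Finset.filter_congr fun y _ => ?_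
      rw [nu_one_eq, hw]
      constructor <;> intro h <;> omega
    rw [hs0, hs1]
  have c0 := count_prod_pow f0 4 1 12 (by norm_num) f0_vals f0_card4 f0_card1
  have c1 := count_prod_pow f1 2 6 4 (by norm_num) f1_vals f1_card2 f1_card1
  have c0' : ∀ k, (((univ : Finset (Fin m → G4))).filter
      fun y => ∏ i, f0 (y i) = 4 ^ k).card = 12 ^ (m - k) * Nat.choose m k := by
    intro k
    rw [c0 m k, one_pow]
    ring
  refine ⟨?_, ?_, ?_, ?_⟩
  · -- zero count
    have htot := Finset.card_filter_add_card_filter_not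
      (s := (univ : Finset (ZMod 2 × (Fin m → G4)))) (p := fun g => nu (T' m) g = 0)
    have hne : ((univ : Finset (ZMod 2 × (Fin m → G4))).filter
        fun g => ¬ nu (T' m) g = 0).card = 13 ^ m + 10 ^ m := by
      rw [card_split m (fun g => ¬ nu (T' m) g = 0)]
      have hs0 : ((univ : Finset (Fin m → G4)).filter fun y => ¬ nu (T' m) (0, y) = 0)
          = (univ.filter fun y => ∏ i, f0 (y i) ≠ 0) := by
        refine Finset.filter_congr fun y _ => ?_
        rw [nu_zero_eq]
        constructor <;> intro h <;> omega
      have hs1 : ((univ : Finset (Fin m → G4)).filter fun y => ¬ nu (T' m) (1, y) = 0)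
          = (univ.filter fun y => ∏ i, f1 (y i) ≠ 0) := by
        refine Finset.filter_congr fun y _ => ?_
        rw [nu_one_eq]
        constructor <;> intro h <;> omega
      rw [hs0, hs1, count_ne_zero f0 13 f0_cardne m, count_ne_zero f1 10 f1_cardne m]
    have hcard : (univ : Finset (ZMod 2 × (Fin m → G4))).card = 2 ^ (4 * m + 1) := by
      rw [card_univ, Fintype.card_prod, Fintype.card_fun]
      have h16 : Fintype.card G4 = 16 := by decide
      have h2 : Fintype.card (ZMod 2) = 2 := by decide
      rw [h16, h2, show (16:ℕ) = 2 ^ 4 by norm_num, ← pow_mul, pow_succ]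
      rw [Fintype.card_fin]
      ring
    rw [hne, hcard] at htot
    generalize hA : ((univ : Finset (ZMod 2 × (Fin m → G4))).filter
      fun g => nu (T' m) g = 0).card = A at htot ⊢
    generalize h13 : (13:ℕ) ^ m = B at htot ⊢
    generalize h10 : (10:ℕ) ^ m = C at htot ⊢
    generalize h2p : (2:ℕ) ^ (4 * m + 1) = D at htot ⊢
    omega
  · -- odd l, 1 ≤ l ≤ m + 1
    intro l hodd h1 h2
    obtain ⟨k, hk⟩ := hodd
    have hdiv : (l - 1) / 2 = k := by omega
    have hl2 : (2:ℕ) ^ l = 2 * 2 ^ (l - 1) := by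
      conv_lhs => rw [show l = (l-1) + 1 by omega]
      rw [pow_succ]; ring
    rw [split2 (2 ^ l) (2 ^ (l-1)) Nat.one_le_two_pow hl2]
    have h4 : (2:ℕ) ^ (l - 1) = 4 ^ k := by
      rw [show (4:ℕ) = 2^2 by norm_num, ← pow_mul]
      congr 1
      omega
    have e0 : (((univ : Finset (Fin m → G4))).filter fun y => ∏ i, f0 (y i) = 2 ^ (l-1))
        = (univ.filter fun y => ∏ i, f0 (y i) = 4 ^ k) :=
      Finset.filter_congr fun y _ => by rw [h4]
    rw [e0, c0' k, hdiv, c1 m (l-1), arith_six m (l-1) (by omega),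
      show l - 1 + 1 = l by omega]
  · -- even l, 2 ≤ l ≤ m + 1
    intro l heven h1 h2
    obtain ⟨j, hj⟩ := heven
    have hl2 : (2:ℕ) ^ l = 2 * 2 ^ (l - 1) := by
      conv_lhs => rw [show l = (l-1) + 1 by omega]
      rw [pow_succ]; ring
    rw [split2 (2 ^ l) (2 ^ (l-1)) Nat.one_le_two_pow hl2]
    have hzero : (((univ : Finset (Fin m → G4))).filter
        fun y => ∏ i, f0 (y i) = 2 ^ (l-1)).card = 0 := by
      rw [Finset.card_eq_zero, Finset.filter_eq_empty_iff]
      intro y _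
      intro hcontra
      rcases prod_zero_or_pow f0 4 f0_vals m y with h | ⟨k, h⟩
      · rw [h] at hcontra
        have hpos : 0 < (2:ℕ) ^ (l-1) := Nat.pow_pos (by norm_num)
        omega
      · rw [h, show (4:ℕ) = 2^2 by norm_num, ← pow_mul] at hcontra
        have := Nat.pow_right_injective (le_refl 2) hcontra.symm
        omega
    rw [hzero, zero_add]
    clear hzero
    rw [c1 m (l-1), arith_six m (l-1) (by omega), show l - 1 + 1 = l by omega]
  · -- odd l, m + 2 ≤ l ≤ 2m + 1
    intro l hodd h1 h2
    obtain ⟨k, hk⟩ := hodd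
    have hdiv : (l - 1) / 2 = k := by omega
    have hl2 : (2:ℕ) ^ l = 2 * 2 ^ (l - 1) := by
      conv_lhs => rw [show l = (l-1) + 1 by omega]
      rw [pow_succ]; ring
    rw [split2 (2 ^ l) (2 ^ (l-1)) Nat.one_le_two_pow hl2]
    have h4 : (2:ℕ) ^ (l - 1) = 4 ^ k := by
      rw [show (4:ℕ) = 2^2 by norm_num, ← pow_mul]
      congr 1
      omega
    have e0 : (((univ : Finset (Fin m → G4))).filter fun y => ∏ i, f0 (y i) = 2 ^ (l-1))
        = (univ.filter fun y => ∏ i, f0 (y i) = 4 ^ k) :=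
      Finset.filter_congr fun y _ => by rw [h4]
    rw [e0, c0' k, hdiv, c1 m (l-1),
      Nat.choose_eq_zero_of_lt (show m < l - 1 by omega)]
    ring
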